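/- Let ε > 0 and let Z₁, Z₂ be independent Laplace(0, 1/ε) random variables on a probability space. For all reals n₁, n₂, with L₁ = max(n₁, n₂) and L₂ = min(n₁, n₂), E[ min(n₁ + Z₁, n₂ + Z₂) ] = L₂ + (exp(−ε·(L₁ − L₂))/4)·(L₂ − L₁ − 3/ε). -/

import Mathlib

open MeasureTheory Real ProbabilityTheory Filter Set

section Helpers

variable {ε : ℝ}

-- tendsto of (c + d*x) * exp(-(ε*x)) to 0 at top
lemma tendsto_affine_exp (hε : 0 < ε) (c d : ℝ) :
    Tendsto (fun x : ℝ => (c + d * x) * exp (-(ε * x))) atTop (nhds 0) := by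
  have h1 : Tendsto (fun x : ℝ => c * exp (-(ε * x))) atTop (nhds 0) := by
    simpa using (tendsto_exp_neg_atTop_nhds_zero.comp (tendsto_id.const_mul_atTop hε)).const_mul c
  have h2 : Tendsto (fun x : ℝ => d / ε * ((ε * x) * exp (-(ε * x)))) atTop (nhds 0) := by
    have := (tendsto_pow_mul_exp_neg_atTop_nhds_zero 1).comp (tendsto_id.const_mul_atTop hε)
    simpa using this.const_mul (d / ε)
  have := h1.add h2
  simp only [add_zero] at this
  refine this.congr (fun x => ?_)
  field_simp

lemma hasDerivAt_affine_exp (hε : 0 < ε) (c d x : ℝ) :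
    HasDerivAt (fun x : ℝ => -((c + d/ε + d * x) / ε * exp (-(ε * x))))
      ((c + d * x) * exp (-(ε * x))) x := by
  have h1 : HasDerivAt (fun x : ℝ => exp (-(ε * x))) (-ε * exp (-(ε * x))) x := by
    simpa [mul_comm, Function.comp_def] using (Real.hasDerivAt_exp (-(ε * x))).comp x
      (((hasDerivAt_id x).const_mul ε).neg)
  have h2 : HasDerivAt (fun x : ℝ => (c + d/ε + d * x) / ε) (d / ε) x := by
    simpa [add_div] using (((hasDerivAt_id x).const_mul d).const_add (c + d/ε)).div_const ε
  have := (h2.mul h1).neg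
  refine this.congr_deriv ?_
  field_simp [hε.ne']
  ring

-- ∫_{Ioi t} (c + d x) e^{-εx} = (c + d/ε + d t)/ε e^{-εt}, when integrand nonneg
lemma integral_affine_exp_Ioi (hε : 0 < ε) {c d t : ℝ} (h : ∀ x ∈ Ioi t, 0 ≤ c + d * x) :
    ∫ x in Ioi t, (c + d * x) * exp (-(ε * x)) = (c + d/ε + d * t) / ε * exp (-(ε * t)) := by
  have := integral_Ioi_of_hasDerivAt_of_nonneg' (a := t)
    (fun x _ => hasDerivAt_affine_exp hε c d x)
    (fun x hx => mul_nonneg (h x hx) (exp_nonneg _))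
    (by simpa [div_mul_eq_mul_div] using ((tendsto_affine_exp hε (c + d/ε) d).div_const ε).neg)
  simpa using this

lemma integrableOn_affine_exp_Ioi (hε : 0 < ε) {c d t : ℝ} (h : ∀ x ∈ Ioi t, 0 ≤ c + d * x) :
    IntegrableOn (fun x => (c + d * x) * exp (-(ε * x))) (Ioi t) :=
  integrableOn_Ioi_deriv_of_nonneg' (fun x _ => hasDerivAt_affine_exp hε c d x)
    (fun x hx => mul_nonneg (h x hx) (exp_nonneg _)) (l := 0)
    (by simpa [div_mul_eq_mul_div] using ((tendsto_affine_exp hε (c + d/ε) d).div_const ε).neg)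

lemma integrableOn_Iic_of_neg {g : ℝ → ℝ} {c : ℝ}
    (h : IntegrableOn (fun x => g (-x)) (Ioi (-c))) : IntegrableOn g (Iic c) := by
  have := (MeasurePreserving.integrableOn_comp_preimage
    (Measure.measurePreserving_neg (volume : Measure ℝ))
    (Homeomorph.neg ℝ).measurableEmbedding (f := fun x => g (-x)) (s := Ioi (-c))).2 h
  have h2 : (fun x : ℝ => -x) ⁻¹' (Ioi (-c)) = Iio c := by ext x; simp
  rw [h2] at this
  have h3 : IntegrableOn g (Iio c) := this.congr_fun (fun x _ => by simp) measurableSet_Iio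
  rwa [integrableOn_Iic_iff_integrableOn_Iio]

noncomputable def lap (ε z : ℝ) : ℝ := ε / 2 * exp (-ε * |z|)

lemma lap_nonneg (ε z : ℝ) (hε : 0 < ε) : 0 ≤ lap ε z :=
  mul_nonneg (by positivity) (exp_nonneg _)

lemma lap_even (ε z : ℝ) : lap ε (-z) = lap ε z := by simp [lap]

lemma lap_continuous (ε : ℝ) : Continuous (lap ε) := by
  unfold lap; fun_prop

-- On Ioi 0, lap ε z = (ε/2) * ((1 + 0*z) * exp (-(ε*z)))
lemma lap_eq_pos {ε z : ℝ} (hz : 0 < z) : lap ε z = ε / 2 * exp (-(ε * z)) := by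
  rw [lap, abs_of_pos hz, neg_mul]

lemma integrableOn_lap_Ioi (hε : 0 < ε) : IntegrableOn (lap ε) (Ioi 0) := by
  have := (integrableOn_affine_exp_Ioi hε (c := 1) (d := 0) (t := 0)
    (by intro x _; norm_num)).const_mul (ε / 2)
  refine IntegrableOn.congr_fun this (fun z hz => ?_) measurableSet_Ioi
  rw [lap_eq_pos hz]; ring

lemma integrable_lap (hε : 0 < ε) : Integrable (lap ε) := by
  have h1 : IntegrableOn (lap ε) (Iic 0) := by
    refine integrableOn_Iic_of_neg ?_
    simp only [lap_even, neg_zero]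
    exact integrableOn_lap_Ioi hε
  rw [← integrableOn_univ, ← Iic_union_Ioi (a := (0:ℝ))]
  exact h1.union (integrableOn_lap_Ioi hε)

lemma integrableOn_lap_abs_Ioi (hε : 0 < ε) :
    IntegrableOn (fun z => lap ε z * |z|) (Ioi 0) := by
  have := (integrableOn_affine_exp_Ioi hε (c := 0) (d := 1) (t := 0)
    (fun x hx => by simpa using le_of_lt hx)).const_mul (ε / 2)
  refine IntegrableOn.congr_fun this (fun z hz => ?_) measurableSet_Ioi
  rw [lap_eq_pos hz, abs_of_pos hz]; ring

lemma integrable_lap_abs (hε : 0 < ε) : Integrable (fun z => lap ε z * |z|) := by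
  have h1 : IntegrableOn (fun z => lap ε z * |z|) (Iic 0) := by
    refine integrableOn_Iic_of_neg ?_
    simp only [lap_even, abs_neg, neg_zero]
    exact integrableOn_lap_abs_Ioi hε
  rw [← integrableOn_univ, ← Iic_union_Ioi (a := (0:ℝ))]
  exact h1.union (integrableOn_lap_abs_Ioi hε)

lemma integrable_lap_mul_abs_add (hε : 0 < ε) (a : ℝ) :
    Integrable (fun z => lap ε z * |a + z|) := by
  refine Integrable.mono' (((integrable_lap hε).const_mul |a|).add (integrable_lap_abs hε))
    (((lap_continuous ε).mul (continuous_const.add continuous_id).abs).aestronglyMeasurable)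
    (Filter.Eventually.of_forall fun z => ?_)
  have h0 := lap_nonneg ε z hε
  have : |a + z| ≤ |a| + |z| := abs_add_le a z
  rw [Real.norm_eq_abs, abs_of_nonneg (mul_nonneg h0 (abs_nonneg _))]
  calc lap ε z * |a + z| ≤ lap ε z * (|a| + |z|) := by nlinarith [abs_nonneg (a+z)]
    _ = |a| * lap ε z + lap ε z * |z| := by ring

lemma integrable_lap_mul_exp_add (hε : 0 < ε) (a : ℝ) :
    Integrable (fun z => lap ε z * exp (-ε * |a + z|)) := by
  refine Integrable.mono' (integrable_lap hε)
    (((lap_continuous ε).mul (by fun_prop)).aestronglyMeasurable)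
    (Filter.Eventually.of_forall fun z => ?_)
  have h0 := lap_nonneg ε z hε
  have h1 : exp (-ε * |a + z|) ≤ 1 := by
    rw [← exp_zero]
    exact exp_le_exp.2 (by nlinarith [abs_nonneg (a+z)])
  rw [Real.norm_eq_abs, abs_of_nonneg (mul_nonneg h0 (exp_nonneg _))]
  nlinarith [exp_nonneg (-ε * |a + z|)]

lemma integrable_lap_mul_id (hε : 0 < ε) : Integrable (fun z => lap ε z * z) := by
  refine Integrable.mono' (integrable_lap_abs hε)
    (((lap_continuous ε).mul continuous_id).aestronglyMeasurable)
    (Filter.Eventually.of_forall fun z => ?_)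
  have h0 := lap_nonneg ε z hε
  rw [Real.norm_eq_abs, abs_mul, abs_of_nonneg h0]

lemma integral_lap_mul_id (hε : 0 < ε) : ∫ z, lap ε z * z = 0 := by
  have h := integral_neg_eq_self (fun z => lap ε z * z) (volume : Measure ℝ)
  simp only [lap_even, mul_neg] at h
  rw [integral_neg] at h
  linarith

lemma hasDerivAt_H (hε : 0 < ε) (a x : ℝ) :
    HasDerivAt (fun x : ℝ => ((1 - ε*a)/(2*ε) + x/2) * exp (-(ε*x)))
      (ε/2 * ((a - x) * exp (-(ε*x)))) x := by
  have h1 : HasDerivAt (fun x : ℝ => exp (-(ε * x))) (-ε * exp (-(ε * x))) x := by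
    simpa [mul_comm, Function.comp_def] using (Real.hasDerivAt_exp (-(ε * x))).comp x
      (((hasDerivAt_id x).const_mul ε).neg)
  have h2 : HasDerivAt (fun x : ℝ => (1 - ε*a)/(2*ε) + x/2) (1/2) x := by
    simpa using ((hasDerivAt_id x).div_const 2).const_add ((1 - ε*a)/(2*ε))
  have := h2.mul h1
  refine this.congr_deriv ?_
  field_simp [hε.ne']
  ring

lemma integral_lap_abs_add_nonneg (hε : 0 < ε) {a : ℝ} (ha : 0 ≤ a) :
    ∫ z, lap ε z * |a + z| = a + exp (-(ε * a)) / ε := by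
  have hε' : ε ≠ 0 := ne_of_gt hε
  have hint := integrable_lap_mul_abs_add hε a
  have hint' := integrable_lap_mul_abs_add hε (-a)
  have hIoi : ∫ z in Ioi (0:ℝ), lap ε z * |a + z| = a/2 + 1/(2*ε) := by
    rw [setIntegral_congr_fun measurableSet_Ioi
      (g := fun z => ε/2 * ((a + 1*z) * exp (-(ε*z))))]
    · rw [integral_const_mul, integral_affine_exp_Ioi hε
        (fun x hx => by have := mem_Ioi.mp hx; nlinarith)]
      simp only [mul_zero, neg_zero, exp_zero]
      field_simp
      ring
    · intro z hz
      have hz' := mem_Ioi.mp hz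
      dsimp only
      rw [lap_eq_pos hz', abs_of_nonneg (by linarith : (0:ℝ) ≤ a + z)]
      ring
  have hf_eq : ∀ x : ℝ, lap ε x * |(-a) + x| = lap ε x * |a - x| := by
    intro x
    rw [show (-a) + x = -(a - x) by ring, abs_neg]
  have hIic : ∫ z in Iic (0:ℝ), lap ε z * |a + z|
      = a/2 - 1/(2*ε) + exp (-(ε*a))/ε := by
    have h1 : ∫ z in Iic (0:ℝ), lap ε z * |a + z|
        = ∫ x in Ioi (0:ℝ), lap ε x * |a - x| := by
      have := integral_comp_neg_Iic (0:ℝ) (fun x => lap ε x * |a - x|)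
      simp only [lap_even, neg_zero] at this
      rw [← this]
      congr 1 with z
      rw [show a - -z = a + z by ring]
    rw [h1]
    have hsplit : Ioc (0:ℝ) a ∪ Ioi a = Ioi 0 := Ioc_union_Ioi_eq_Ioi ha
    rw [← hsplit, setIntegral_union (Ioc_disjoint_Ioi le_rfl) measurableSet_Ioi
      ((hint'.integrableOn).congr_fun (fun x _ => hf_eq x) measurableSet_Ioc)
      ((hint'.integrableOn).congr_fun (fun x _ => hf_eq x) measurableSet_Ioi)]
    have hIoia : ∫ x in Ioi a, lap ε x * |a - x| = exp (-(ε*a))/(2*ε) := by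
      rw [setIntegral_congr_fun measurableSet_Ioi
        (g := fun x => ε/2 * ((-a + 1*x) * exp (-(ε*x))))]
      · rw [integral_const_mul, integral_affine_exp_Ioi hε
          (fun x hx => by have := mem_Ioi.mp hx; nlinarith)]
        field_simp
        ring
      · intro x hx
        have hx' := mem_Ioi.mp hx
        dsimp only
        rw [lap_eq_pos (lt_of_le_of_lt ha hx'), abs_of_nonpos (by linarith : a - x ≤ 0)]
        ring
    have hIoc : ∫ x in Ioc (0:ℝ) a, lap ε x * |a - x|
        = exp (-(ε*a))/(2*ε) - (1 - ε*a)/(2*ε) := by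
      rw [setIntegral_congr_fun measurableSet_Ioc
        (g := fun x => ε/2 * ((a - x) * exp (-(ε*x))))]
      · rw [← intervalIntegral.integral_of_le ha,
          intervalIntegral.integral_eq_sub_of_hasDerivAt
            (fun x _ => hasDerivAt_H hε a x)
            (Continuous.intervalIntegrable (by fun_prop) 0 a)]
        simp only [mul_zero, neg_zero, exp_zero]
        field_simp
        ring
      · intro x hx
        obtain ⟨hx1, hx2⟩ := hx
        dsimp only
        rw [lap_eq_pos hx1, abs_of_nonneg (by linarith : (0:ℝ) ≤ a - x)]
        ring
    rw [hIoia, hIoc]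
    field_simp
    ring
  rw [← intervalIntegral.integral_Iic_add_Ioi hint.integrableOn hint.integrableOn, hIic, hIoi]
  ring

lemma integral_lap_abs_add (hε : 0 < ε) (a : ℝ) :
    ∫ z, lap ε z * |a + z| = |a| + exp (-(ε * |a|)) / ε := by
  rcases le_or_gt 0 a with ha | ha
  · rw [abs_of_nonneg ha]; exact integral_lap_abs_add_nonneg hε ha
  · have h := integral_neg_eq_self (fun z => lap ε z * |a + z|) (volume : Measure ℝ)
    rw [← h]
    have : ∀ z : ℝ, lap ε (-z) * |a + -z| = lap ε z * |(-a) + z| := by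
      intro z
      rw [lap_even, show a + -z = -((-a) + z) by ring, abs_neg]
    simp only [this]
    rw [integral_lap_abs_add_nonneg hε (by linarith : (0:ℝ) ≤ -a), abs_of_neg ha]

lemma integral_lap_exp_add_nonneg (hε : 0 < ε) {a : ℝ} (ha : 0 ≤ a) :
    ∫ z, lap ε z * exp (-ε * |a + z|) = ε / 2 * exp (-(ε * a)) * (a + 1/ε) := by
  have hε' : ε ≠ 0 := ne_of_gt hε
  have h2ε : 0 < 2 * ε := by linarith
  have hint := integrable_lap_mul_exp_add hε a
  have hint' := integrable_lap_mul_exp_add hε (-a)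
  have hIoi : ∫ z in Ioi (0:ℝ), lap ε z * exp (-ε * |a + z|) = exp (-(ε * a)) / 4 := by
    rw [setIntegral_congr_fun measurableSet_Ioi
      (g := fun z => (ε/2 * exp (-(ε*a))) * ((1 + 0*z) * exp (-(2*ε*z))))]
    · rw [integral_const_mul, integral_affine_exp_Ioi h2ε (fun x _ => by norm_num)]
      simp only [mul_zero, neg_zero, exp_zero]
      field_simp
      ring
    · intro z hz
      have hz' := mem_Ioi.mp hz
      dsimp only
      rw [lap_eq_pos hz', abs_of_nonneg (by linarith : (0:ℝ) ≤ a + z)]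
      simp only [zero_mul, add_zero, one_mul, mul_assoc, ← exp_add]
      congr 1
      ring
  have hf_eq : ∀ x : ℝ, lap ε x * exp (-ε * |(-a) + x|) = lap ε x * exp (-ε * |a - x|) := by
    intro x
    rw [show (-a) + x = -(a - x) by ring, abs_neg]
  have hIic : ∫ z in Iic (0:ℝ), lap ε z * exp (-ε * |a + z|)
      = exp (-(ε*a)) / 4 + ε / 2 * exp (-(ε*a)) * a := by
    have h1 : ∫ z in Iic (0:ℝ), lap ε z * exp (-ε * |a + z|)
        = ∫ x in Ioi (0:ℝ), lap ε x * exp (-ε * |a - x|) := by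
      have := integral_comp_neg_Iic (0:ℝ) (fun x => lap ε x * exp (-ε * |a - x|))
      simp only [lap_even, neg_zero] at this
      rw [← this]
      congr 1 with z
      rw [show a - -z = a + z by ring]
    rw [h1]
    have hsplit : Ioc (0:ℝ) a ∪ Ioi a = Ioi 0 := Ioc_union_Ioi_eq_Ioi ha
    rw [← hsplit, setIntegral_union (Ioc_disjoint_Ioi le_rfl) measurableSet_Ioi
      ((hint'.integrableOn).congr_fun (fun x _ => hf_eq x) measurableSet_Ioc)
      ((hint'.integrableOn).congr_fun (fun x _ => hf_eq x) measurableSet_Ioi)]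
    have hIoia : ∫ x in Ioi a, lap ε x * exp (-ε * |a - x|) = exp (-(ε*a)) / 4 := by
      rw [setIntegral_congr_fun measurableSet_Ioi
        (g := fun x => (ε/2 * exp (ε*a)) * ((1 + 0*x) * exp (-(2*ε*x))))]
      · rw [integral_const_mul, integral_affine_exp_Ioi h2ε (fun x _ => by norm_num)]
        rw [show -(2*ε*a) = -(ε*a) + -(ε * a) by ring, exp_add]
        field_simp
        simp only [mul_assoc, ← exp_add]
        ring_nf
        rw [mul_assoc ε, ← exp_add, add_neg_cancel, exp_zero, mul_one]
      · intro x hx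
        have hx' := mem_Ioi.mp hx
        dsimp only
        rw [lap_eq_pos (lt_of_le_of_lt ha hx'), abs_of_nonpos (by linarith : a - x ≤ 0)]
        simp only [zero_mul, add_zero, one_mul, mul_assoc, ← exp_add]
        congr 1
        ring
    have hIoc : ∫ x in Ioc (0:ℝ) a, lap ε x * exp (-ε * |a - x|)
        = ε / 2 * exp (-(ε*a)) * a := by
      rw [setIntegral_congr_fun measurableSet_Ioc
        (g := fun _ => ε / 2 * exp (-(ε*a)))]
      · rw [setIntegral_const]
        simp [Real.volume_Ioc, ENNReal.toReal_ofReal ha, max_eq_left ha]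
        ring
      · intro x hx
        obtain ⟨hx1, hx2⟩ := hx
        dsimp only
        rw [lap_eq_pos hx1, abs_of_nonneg (by linarith : (0:ℝ) ≤ a - x)]
        simp only [mul_assoc, ← exp_add]
        congr 1
        ring
    rw [hIoia, hIoc]
    ring
  rw [← intervalIntegral.integral_Iic_add_Ioi hint.integrableOn hint.integrableOn, hIic, hIoi]
  field_simp
  ring

lemma integral_lap_exp_add (hε : 0 < ε) (a : ℝ) :
    ∫ z, lap ε z * exp (-ε * |a + z|) = ε / 2 * exp (-(ε * |a|)) * (|a| + 1/ε) := by
  rcases le_or_gt 0 a with ha | ha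
  · rw [abs_of_nonneg ha]; exact integral_lap_exp_add_nonneg hε ha
  · have h := integral_neg_eq_self (fun z => lap ε z * exp (-ε * |a + z|)) (volume : Measure ℝ)
    rw [← h]
    have : ∀ z : ℝ, lap ε (-z) * exp (-ε * |a + -z|) = lap ε z * exp (-ε * |(-a) + z|) := by
      intro z
      rw [lap_even, show a + -z = -((-a) + z) by ring, abs_neg]
    simp only [this]
    rw [integral_lap_exp_add_nonneg hε (by linarith : (0:ℝ) ≤ -a), abs_of_neg ha]

lemma integral_lap_density (hε : 0 < ε) (g : ℝ → ℝ) :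
    ∫ z, g z ∂(volume.withDensity fun z => ENNReal.ofReal (lap ε z))
      = ∫ z, lap ε z * g z := by
  rw [show (fun z => ENNReal.ofReal (lap ε z)) = fun z => ((lap ε z).toNNReal : ENNReal)
      from rfl,
    integral_withDensity_eq_integral_smul ((lap_continuous ε).measurable.real_toNNReal) g]
  congr 1 with z
  simp [NNReal.smul_def, Real.coe_toNNReal _ (lap_nonneg ε z hε)]

lemma integrable_lap_density_iff (hε : 0 < ε) (g : ℝ → ℝ) :
    Integrable g (volume.withDensity fun z => ENNReal.ofReal (lap ε z))
      ↔ Integrable (fun z => lap ε z * g z) volume := by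
  rw [show (fun z => ENNReal.ofReal (lap ε z)) = fun z => ((lap ε z).toNNReal : ENNReal)
      from rfl,
    integrable_withDensity_iff_integrable_smul ((lap_continuous ε).measurable.real_toNNReal)]
  constructor <;> intro h <;> refine h.congr (Filter.Eventually.of_forall fun z => ?_) <;>
    simp [NNReal.smul_def, Real.coe_toNNReal _ (lap_nonneg ε z hε)]


end Helpers

/-- Expectation of the minimum of two independent Laplace(0, 1/ε) random variables
shifted by `n₁` and `n₂`:
`E[min(n₁ + Z₁, n₂ + Z₂)] = L₂ + (exp(−ε·(L₁ − L₂))/4)·(L₂ − L₁ − 3/ε)`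
where `L₁ = max(n₁, n₂)` and `L₂ = min(n₁, n₂)`. -/
theorem expectation_min_shifted_laplace {Ω : Type*} [MeasurableSpace Ω]
    (P : Measure Ω) [IsProbabilityMeasure P]
    (ε : ℝ) (hε : 0 < ε) (Z₁ Z₂ : Ω → ℝ)
    (hZ₁ : Measurable Z₁) (hZ₂ : Measurable Z₂)
    (hindep : IndepFun Z₁ Z₂ P)
    (hlaw₁ : Measure.map Z₁ P =
      volume.withDensity (fun z => ENNReal.ofReal (ε / 2 * Real.exp (-ε * |z|))))
    (hlaw₂ : Measure.map Z₂ P =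
      volume.withDensity (fun z => ENNReal.ofReal (ε / 2 * Real.exp (-ε * |z|))))
    (n₁ n₂ : ℝ) :
    ∫ ω, min (n₁ + Z₁ ω) (n₂ + Z₂ ω) ∂P =
      min n₁ n₂ + Real.exp (-ε * (max n₁ n₂ - min n₁ n₂)) / 4 *
        (min n₁ n₂ - max n₁ n₂ - 3 / ε) := by
  have hε' : ε ≠ 0 := ne_of_gt hε
  set c := n₁ - n₂ with hc
  set D : Measure ℝ := volume.withDensity (fun z => ENNReal.ofReal (lap ε z)) with hD
  have hlaw₁' : Measure.map Z₁ P = D := hlaw₁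
  have hlaw₂' : Measure.map Z₂ P = D := hlaw₂
  have hDprob : IsProbabilityMeasure D := by
    rw [← hlaw₁']; exact Measure.isProbabilityMeasure_map hZ₁.aemeasurable
  -- integrability of Z₁, Z₂
  have hZint : ∀ (Z : Ω → ℝ), Measurable Z → Measure.map Z P = D →
      Integrable Z P ∧ ∫ ω, Z ω ∂P = 0 := by
    intro Z hZ hlaw
    have hid : Integrable (fun z : ℝ => z) D := by
      rw [hD, integrable_lap_density_iff hε]
      exact integrable_lap_mul_id hε
    have h1 : Integrable Z P := by
      have := (integrable_map_measure (f := Z) (g := fun z : ℝ => z)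
        aestronglyMeasurable_id hZ.aemeasurable).1 (by rwa [hlaw])
      simpa [Function.comp_def] using this
    refine ⟨h1, ?_⟩
    have h2 : ∫ ω, Z ω ∂P = ∫ z, (fun z : ℝ => z) z ∂(Measure.map Z P) :=
      (integral_map hZ.aemeasurable aestronglyMeasurable_id).symm
    rw [h2, hlaw, hD, integral_lap_density hε]
    exact integral_lap_mul_id hε
  obtain ⟨hZ₁int, hZ₁val⟩ := hZint Z₁ hZ₁ hlaw₁'
  obtain ⟨hZ₂int, hZ₂val⟩ := hZint Z₂ hZ₂ hlaw₂'
  -- integrability of |c + Z₁ - Z₂|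
  have habs : Integrable (fun ω => |c + (Z₁ ω - Z₂ ω)|) P := by
    refine Integrable.mono' (((integrable_const |c|).add hZ₁int.abs).add hZ₂int.abs)
      ((hZ₁.sub hZ₂).const_add c).abs.aestronglyMeasurable
      (Filter.Eventually.of_forall fun ω => ?_)
    rw [Real.norm_eq_abs, abs_abs]
    calc |c + (Z₁ ω - Z₂ ω)| ≤ |c| + |Z₁ ω - Z₂ ω| := abs_add_le _ _
      _ ≤ |c| + (|Z₁ ω| + |Z₂ ω|) := by gcongr; exact abs_sub _ _
      _ = |c| + |Z₁ ω| + |Z₂ ω| := by ring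
  -- step 1: reduce min to |·|
  have hmin : ∀ ω, min (n₁ + Z₁ ω) (n₂ + Z₂ ω)
      = (n₁ + n₂) / 2 + Z₁ ω / 2 + Z₂ ω / 2 - |c + (Z₁ ω - Z₂ ω)| / 2 := by
    intro ω
    rcases le_total (n₁ + Z₁ ω) (n₂ + Z₂ ω) with h | h
    · rw [min_eq_left h, abs_of_nonpos (by simp only [hc]; linarith)]; simp only [hc]; ring
    · rw [min_eq_right h, abs_of_nonneg (by simp only [hc]; linarith)]; simp only [hc]; ring
  have hsplit : ∫ ω, min (n₁ + Z₁ ω) (n₂ + Z₂ ω) ∂P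
      = (n₁ + n₂) / 2 - (∫ ω, |c + (Z₁ ω - Z₂ ω)| ∂P) / 2 := by
    simp only [hmin]
    have B : Integrable (fun ω => (n₁ + n₂) / 2 + Z₁ ω / 2) P :=
      (integrable_const _).add (hZ₁int.div_const 2)
    have A : Integrable (fun ω => (n₁ + n₂) / 2 + Z₁ ω / 2 + Z₂ ω / 2) P :=
      B.add (hZ₂int.div_const 2)
    rw [integral_sub A (habs.div_const 2), integral_add B (hZ₂int.div_const 2),
      integral_add (integrable_const _) (hZ₁int.div_const 2),
      integral_div, integral_div, integral_div, hZ₁val, hZ₂val, integral_const]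
    · simp
      exact integral_div 2 fun ω => |c + (Z₁ ω - Z₂ ω)|
  -- step 2: compute E|c + Z₁ - Z₂| via the product law
  have hpair : Measure.map (fun ω => (Z₁ ω, Z₂ ω)) P = D.prod D := by
    rw [(indepFun_iff_map_prod_eq_prod_map_map hZ₁.aemeasurable hZ₂.aemeasurable).1 hindep,
      hlaw₁', hlaw₂']
  have hgcont : Continuous (fun p : ℝ × ℝ => |c + (p.1 - p.2)|) := by fun_prop
  have hEabs : ∫ ω, |c + (Z₁ ω - Z₂ ω)| ∂P
      = ∫ p : ℝ × ℝ, |c + (p.1 - p.2)| ∂(D.prod D) := by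
    rw [← hpair, integral_map (hZ₁.prodMk hZ₂).aemeasurable
      hgcont.aestronglyMeasurable]
  have hintprod : Integrable (fun p : ℝ × ℝ => |c + (p.1 - p.2)|) (D.prod D) := by
    rw [← hpair, integrable_map_measure hgcont.aestronglyMeasurable
      (hZ₁.prodMk hZ₂).aemeasurable]
    exact habs
  have hinner : ∀ x : ℝ, ∫ y, |c + (x - y)| ∂D = |c + x| + exp (-(ε * |c + x|)) / ε := by
    intro x
    rw [hD, integral_lap_density hε]
    have : ∫ y, lap ε y * |c + (x - y)| = ∫ y, lap ε y * |(c + x) + y| := by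
      rw [← integral_neg_eq_self (fun y => lap ε y * |(c + x) + y|) volume]
      congr 1 with y
      rw [lap_even, show (c + x) + -y = c + (x - y) by ring]
    rw [this, integral_lap_abs_add hε (c + x)]
  have houter : ∫ p : ℝ × ℝ, |c + (p.1 - p.2)| ∂(D.prod D)
      = |c| + exp (-(ε * |c|)) * (|c| / 2 + 3 / (2 * ε)) := by
    rw [integral_prod _ hintprod]
    simp only [hinner]
    have h1 : Integrable (fun x => |c + x|) D := by
      rw [hD, integrable_lap_density_iff hε]
      exact integrable_lap_mul_abs_add hε c
    have h2 : Integrable (fun x => exp (-(ε * |c + x|)) / ε) D := by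
      apply Integrable.div_const
      rw [hD, integrable_lap_density_iff hε]
      have := integrable_lap_mul_exp_add hε c
      refine this.congr (Filter.Eventually.of_forall fun z => ?_)
      dsimp only
      rw [neg_mul]
    rw [integral_add h1 h2, integral_div]
    rw [hD, integral_lap_density hε, integral_lap_density hε,
      integral_lap_abs_add hε c]
    have h3 : ∫ z, lap ε z * exp (-(ε * |c + z|)) = ε / 2 * exp (-(ε * |c|)) * (|c| + 1/ε) := by
      rw [← integral_lap_exp_add hε c]
      congr 1 with z
      rw [neg_mul]
    rw [h3]
    field_simp
    ring
  -- final algebra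
  rw [hsplit, hEabs, houter]
  have hmaxmin : max n₁ n₂ - min n₁ n₂ = |c| := by
    rw [hc, max_sub_min_eq_abs, abs_sub_comm]
  have hminval : min n₁ n₂ = (n₁ + n₂) / 2 - |c| / 2 := by
    rcases le_total n₁ n₂ with h | h
    · rw [min_eq_left h, hc, abs_of_nonpos (by linarith)]; ring
    · rw [min_eq_right h, hc, abs_of_nonneg (by linarith)]; ring
  have hmaxval : max n₁ n₂ = (n₁ + n₂) / 2 + |c| / 2 := by
    rcases le_total n₁ n₂ with h | h
    · rw [max_eq_right h, hc, abs_of_nonpos (by linarith)]; ring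
    · rw [max_eq_left h, hc, abs_of_nonneg (by linarith)]; ring
  rw [hmaxmin, hminval, hmaxval, show -ε * |c| = -(ε * |c|) by ring]
  field_simp
  ring
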